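/- Let B be a finite set with |B| ≥ 2 and let x_{1,b}, x_{2,b} ≥ 0 with x_{1,b}+x_{2,b} ≤ 1 for all b ∈ B. Fix an element b̂ ∈ B and a partition (B₁, B₂) of B with b̂ ∈ B₂. Define Φ(B₁,B₂) = ∏_{b∈B₁}(1-x_{1,b})(1-x_{2,b}) · ∏_{b∈B₂}(1-x_{1,b}-x_{2,b}) + ∑_{b∈B₁∪B₂} x_{2,b} · [∏_{b'∈B₁, b'≠b}(1-x_{1,b'})(1-x_{2,b'}) · ∏_{b'∈B₂, b'≠b}(1-x_{1,b'}-x_{2,b'})]. Then Φ(B₁, B₂) ≤ Φ(B₁ ∪ {b̂}, B₂ \ {b̂}). -/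
import Mathlib


theorem stmt1 {ι : Type*} [DecidableEq ι] (B B1 B2 : Finset ι)
    (x1 x2 : ι → ℝ) (hdisj : Disjoint B1 B2) (hunion : B1 ∪ B2 = B)
    (hB : 2 ≤ B.card)
    (h1 : ∀ b ∈ B, 0 ≤ x1 b) (h2 : ∀ b ∈ B, 0 ≤ x2 b)
    (hsum : ∀ b ∈ B, x1 b + x2 b ≤ 1)
    (bhat : ι) (hbhat : bhat ∈ B2)
    (Φ : Finset ι → Finset ι → ℝ)
    (hΦ : ∀ S1 S2 : Finset ι, Φ S1 S2 =
      (∏ b ∈ S1, (1 - x1 b) * (1 - x2 b)) * (∏ b ∈ S2, (1 - x1 b - x2 b)) +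
      ∑ b ∈ S1 ∪ S2, x2 b *
        ((∏ b' ∈ S1.erase b, (1 - x1 b') * (1 - x2 b')) *
         (∏ b' ∈ S2.erase b, (1 - x1 b' - x2 b')))) :
    Φ B1 B2 ≤ Φ (insert bhat B1) (B2.erase bhat) := by
  have hb1 : bhat ∉ B1 := fun h => Finset.disjoint_left.mp hdisj h hbhat
  have hbB : bhat ∈ B := hunion ▸ Finset.mem_union_right _ hbhat
  have hB1sub : B1 ⊆ B := hunion ▸ Finset.subset_union_left
  have hB2sub : B2 ⊆ B := hunion ▸ Finset.subset_union_right
  have hf1 : ∀ b ∈ B, 0 ≤ (1 - x1 b) * (1 - x2 b) := by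
    intro b hb
    nlinarith [h1 b hb, h2 b hb, hsum b hb]
  have hf2 : ∀ b ∈ B, 0 ≤ 1 - x1 b - x2 b := by
    intro b hb; linarith [hsum b hb]
  have hkey : 1 - x1 bhat - x2 bhat ≤ (1 - x1 bhat) * (1 - x2 bhat) := by
    nlinarith [h1 bhat hbB, h2 bhat hbB]
  have hU : insert bhat B1 ∪ B2.erase bhat = B1 ∪ B2 := by
    ext a
    simp only [Finset.mem_union, Finset.mem_insert, Finset.mem_erase]
    by_cases ha : a = bhat
    · subst ha; tauto
    · tauto
  rw [hΦ, hΦ, hU]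
  apply add_le_add
  · rw [Finset.prod_insert hb1, ← Finset.mul_prod_erase B2 _ hbhat]
    have hP1 : 0 ≤ ∏ b ∈ B1, (1 - x1 b) * (1 - x2 b) :=
      Finset.prod_nonneg fun b hb => hf1 b (hB1sub hb)
    have hP2 : 0 ≤ ∏ b ∈ B2.erase bhat, (1 - x1 b - x2 b) :=
      Finset.prod_nonneg fun b hb => hf2 b (hB2sub (Finset.mem_of_mem_erase hb))
    nlinarith [mul_nonneg hP1 hP2]
  · apply Finset.sum_le_sum
    intro b hb
    have hbB' : b ∈ B := hunion ▸ hb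
    by_cases hbe : b = bhat
    · subst hbe
      rw [Finset.erase_insert hb1, Finset.erase_idem, Finset.erase_eq_of_notMem hb1]
    · have hne : bhat ≠ b := fun h => hbe h.symm
      rw [Finset.erase_insert_of_ne hne, Finset.erase_right_comm,
        Finset.prod_insert (fun h => hb1 (Finset.mem_of_mem_erase h)),
        ← Finset.mul_prod_erase (B2.erase b) _ (Finset.mem_erase.mpr ⟨hne, hbhat⟩)]
      have hP1 : 0 ≤ ∏ b' ∈ B1.erase b, (1 - x1 b') * (1 - x2 b') :=
        Finset.prod_nonneg fun c hc => hf1 c (hB1sub (Finset.mem_of_mem_erase hc))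
      have hP2 : 0 ≤ ∏ b' ∈ (B2.erase b).erase bhat, (1 - x1 b' - x2 b') :=
        Finset.prod_nonneg fun c hc =>
          hf2 c (hB2sub (Finset.mem_of_mem_erase (Finset.mem_of_mem_erase hc)))
      have hx2 : 0 ≤ x2 b := h2 b hbB'
      nlinarith [mul_nonneg hP1 hP2, mul_nonneg hx2 (mul_nonneg hP1 hP2)]
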